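/- Let α > 0 and let p₄ be a positive Borel measure on (0,∞) with ∫_{(0,∞)} min(1,x) p₄(dx) < ∞. Then for every y > 0 the integral ∫_{(0,∞)} g⁰_α(x,y) p₄(dx) is finite, and if the function y ↦ e^{√(2α)y}·∫_{(0,∞)} g⁰_α(x,y) p₄(dx) is constant on (0,∞), then p₄ is the null measure. -/

import Mathlib

open MeasureTheory Real Filter Topology

/-- The resolvent density of killed Brownian motion on `(0,∞)`. -/
noncomputable def g0 (α x y : ℝ) : ℝ :=
  (2 / Real.sqrt (2 * α)) * Real.sinh (Real.sqrt (2 * α) * min x y) *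
    Real.exp (-(Real.sqrt (2 * α) * max x y))

lemma aux_sinh_le_exp (t : ℝ) : Real.sinh t ≤ Real.exp t := by
  rw [Real.sinh_eq]
  nlinarith [Real.exp_pos (-t), Real.exp_pos t]

lemma aux_sinh_le_mul_exp {t : ℝ} (ht : 0 ≤ t) : Real.sinh t ≤ t * Real.exp t := by
  rw [Real.sinh_eq]
  have h1 : Real.exp (-t) * Real.exp t = 1 := by rw [← Real.exp_add]; simp
  have h2 : 1 - 2*t ≤ Real.exp (-t) * Real.exp (-t) := by
    rw [← Real.exp_add]
    have := Real.add_one_le_exp (-t + -t)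
    linarith
  nlinarith [Real.exp_pos t, Real.exp_pos (-t), sq_nonneg (Real.exp t),
    mul_le_mul_of_nonneg_left h2 (mul_pos (Real.exp_pos t) (Real.exp_pos t)).le]

lemma g0_nonneg {α x y : ℝ} (hx : 0 ≤ x) (hy : 0 ≤ y) : 0 ≤ g0 α x y := by
  have h1 : (0:ℝ) ≤ 2 / Real.sqrt (2 * α) := by positivity
  have h2 : 0 ≤ Real.sinh (Real.sqrt (2 * α) * min x y) :=
    Real.sinh_nonneg_iff.2 (mul_nonneg (Real.sqrt_nonneg _) (le_min hx hy))
  exact mul_nonneg (mul_nonneg h1 h2) (Real.exp_pos _).le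

lemma g0_key {α x y : ℝ} (hα : 0 < α) (hx : 0 ≤ x) (hy : 0 ≤ y) :
    Real.sinh (Real.sqrt (2 * α) * min x y) * Real.exp (-(Real.sqrt (2 * α) * max x y))
      ≤ min (Real.sqrt (2 * α) * x) 1 := by
  set c := Real.sqrt (2 * α) with hc
  have hc0 : 0 < c := Real.sqrt_pos.2 (by linarith)
  have hm0 : 0 ≤ min x y := le_min hx hy
  have hmM : min x y ≤ max x y := min_le_max
  have hmx : min x y ≤ x := min_le_left _ _
  have hE : Real.exp (c * min x y) * Real.exp (-(c * max x y)) ≤ 1 := by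
    rw [← Real.exp_add]
    exact Real.exp_le_one_iff.2 (by nlinarith)
  refine le_min ?_ ?_
  · calc Real.sinh (c * min x y) * Real.exp (-(c * max x y))
        ≤ (c * min x y * Real.exp (c * min x y)) * Real.exp (-(c * max x y)) := by
          exact mul_le_mul_of_nonneg_right (aux_sinh_le_mul_exp (by positivity)) (Real.exp_pos _).le
      _ = c * min x y * (Real.exp (c * min x y) * Real.exp (-(c * max x y))) := by ring
      _ ≤ c * min x y * 1 := by
          exact mul_le_mul_of_nonneg_left hE (by positivity)
      _ ≤ c * x := by nlinarith
  · calc Real.sinh (c * min x y) * Real.exp (-(c * max x y))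
        ≤ Real.exp (c * min x y) * Real.exp (-(c * max x y)) :=
          mul_le_mul_of_nonneg_right (aux_sinh_le_exp _) (Real.exp_pos _).le
      _ ≤ 1 := hE

lemma min_mul_le {c x : ℝ} (hc : 0 < c) (hx : 0 ≤ x) :
    min (c * x) 1 ≤ max c 1 * min 1 x := by
  rcases le_total x 1 with h | h
  · rw [min_eq_right h]
    calc min (c*x) 1 ≤ c * x := min_le_left _ _
      _ ≤ max c 1 * x := mul_le_mul_of_nonneg_right (le_max_left _ _) hx
  · rw [min_eq_left h]
    calc min (c*x) 1 ≤ 1 := min_le_right _ _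
      _ ≤ max c 1 * 1 := by simp [le_max_right]
    
lemma g0_le_bound {α x y : ℝ} (hα : 0 < α) (hx : 0 ≤ x) (hy : 0 ≤ y) :
    g0 α x y ≤ (2 / Real.sqrt (2*α)) * max (Real.sqrt (2*α)) 1 * min 1 x := by
  have hc0 : 0 < Real.sqrt (2*α) := Real.sqrt_pos.2 (by linarith)
  have h := (g0_key hα hx hy).trans (min_mul_le hc0 hx)
  have h2 : (0:ℝ) ≤ 2 / Real.sqrt (2*α) := by positivity
  calc g0 α x y = (2 / Real.sqrt (2*α)) *
      (Real.sinh (Real.sqrt (2 * α) * min x y) * Real.exp (-(Real.sqrt (2 * α) * max x y))) := by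
        rw [g0]; ring
    _ ≤ (2 / Real.sqrt (2*α)) * (max (Real.sqrt (2*α)) 1 * min 1 x) :=
        mul_le_mul_of_nonneg_left h h2
    _ = _ := by ring

lemma g0_le_sinh {α x y : ℝ} (hα : 0 < α) (hx : 0 ≤ x) (hy : 0 ≤ y) :
    g0 α x y ≤ (2 / Real.sqrt (2*α)) * Real.sinh (Real.sqrt (2*α) * y) := by
  have hc0 : 0 < Real.sqrt (2*α) := Real.sqrt_pos.2 (by linarith)
  have h2 : (0:ℝ) ≤ 2 / Real.sqrt (2*α) := by positivity
  have hs : Real.sinh (Real.sqrt (2*α) * min x y) ≤ Real.sinh (Real.sqrt (2*α) * y) :=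
    Real.sinh_le_sinh.2 (mul_le_mul_of_nonneg_left (min_le_right _ _) hc0.le)
  have hM : (0:ℝ) ≤ max x y := le_max_of_le_left hx
  have he : Real.exp (-(Real.sqrt (2 * α) * max x y)) ≤ 1 :=
    Real.exp_le_one_iff.2 (by nlinarith)
  have hs0 : 0 ≤ Real.sinh (Real.sqrt (2*α) * min x y) :=
    Real.sinh_nonneg_iff.2 (by positivity)
  calc g0 α x y ≤ (2 / Real.sqrt (2*α)) * Real.sinh (Real.sqrt (2 * α) * min x y) * 1 := by
        exact mul_le_mul_of_nonneg_left he (by positivity)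
    _ ≤ (2 / Real.sqrt (2*α)) * Real.sinh (Real.sqrt (2*α) * y) := by
        rw [mul_one]; exact mul_le_mul_of_nonneg_left hs h2

lemma g0_continuous (α y : ℝ) : Continuous fun x => g0 α x y := by
  unfold g0; fun_prop

/-- For `α > 0` and a positive Borel measure `p₄` on `(0,∞)` with
`∫ min(1,x) p₄(dx) < ∞`: for every `y > 0` the integral `∫ g⁰_α(x,y) p₄(dx)` is
finite, and if `y ↦ e^{√(2α)y}·∫ g⁰_α(x,y) p₄(dx)` is constant on `(0,∞)`,
then `p₄` is the null measure. -/
theorem stmt13 (α : ℝ) (hα : 0 < α) (p₄ : Measure ℝ)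
    (hfin : (∫⁻ x in Set.Ioi (0 : ℝ), ENNReal.ofReal (min 1 x) ∂p₄) < ⊤) :
    (∀ y > (0 : ℝ), IntegrableOn (fun x => g0 α x y) (Set.Ioi 0) p₄) ∧
    ((∃ cst : ℝ, ∀ y ∈ Set.Ioi (0 : ℝ),
        Real.exp (Real.sqrt (2 * α) * y) *
          (∫ x in Set.Ioi (0 : ℝ), g0 α x y ∂p₄) = cst) →
      p₄ (Set.Ioi 0) = 0) := by
  have hc0 : 0 < Real.sqrt (2 * α) := Real.sqrt_pos.2 (by linarith)
  have hmin_int : Integrable (fun x : ℝ => min 1 x) (p₄.restrict (Set.Ioi 0)) := by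
    refine ⟨(continuous_const.min continuous_id).aestronglyMeasurable, ?_⟩
    rw [hasFiniteIntegral_iff_norm]
    refine lt_of_le_of_lt (lintegral_mono_ae ?_) hfin
    filter_upwards [ae_restrict_mem measurableSet_Ioi] with x hx
    rw [Real.norm_eq_abs, abs_of_nonneg (le_min zero_le_one hx.le)]
  have hInt : ∀ y : ℝ, 0 < y → IntegrableOn (fun x => g0 α x y) (Set.Ioi 0) p₄ := by
    intro y hy
    refine ((hmin_int.const_mul ((2 / Real.sqrt (2*α)) * max (Real.sqrt (2*α)) 1)).mono'
      ((g0_continuous α y).aestronglyMeasurable) ?_)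
    filter_upwards [ae_restrict_mem measurableSet_Ioi] with x hx
    rw [Real.norm_eq_abs, abs_of_nonneg (g0_nonneg hx.le hy.le)]
    exact g0_le_bound hα hx.le hy.le
  refine ⟨fun y hy => hInt y hy, ?_⟩
  rintro ⟨cst, hcst⟩
  have hy_pos : ∀ n : ℕ, (0:ℝ) < 1/(n+1) := fun n => by positivity
  have h1le : ∀ n : ℕ, (1:ℝ)/(n+1) ≤ 1 := by
    intro n
    rw [div_le_one (by positivity)]
    exact le_add_of_nonneg_left (Nat.cast_nonneg n)
  have hexp_le : ∀ n : ℕ, Real.exp (Real.sqrt (2*α) * (1/(n+1))) ≤ Real.exp (Real.sqrt (2*α)) :=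
    fun n => Real.exp_le_exp.2 (by nlinarith [h1le n, hy_pos n])
  have hDCT : Filter.Tendsto (fun n : ℕ => ∫ x in Set.Ioi (0:ℝ),
      Real.exp (Real.sqrt (2*α) * (1/(n+1))) * g0 α x (1/(n+1)) ∂p₄) Filter.atTop
      (nhds (∫ x in Set.Ioi (0:ℝ), (0:ℝ) ∂p₄)) := by
    apply tendsto_integral_of_dominated_convergence
      (bound := fun x => (Real.exp (Real.sqrt (2*α)) * ((2 / Real.sqrt (2*α)) * max (Real.sqrt (2*α)) 1)) * min 1 x)
    · intro n
      exact (continuous_const.mul (g0_continuous α _)).aestronglyMeasurable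
    · exact hmin_int.const_mul _
    · intro n
      filter_upwards [ae_restrict_mem measurableSet_Ioi] with x hx
      have hg0 := g0_nonneg (α := α) (x := x) (y := 1/(n+1)) hx.le (hy_pos n).le
      rw [Real.norm_eq_abs, abs_of_nonneg (mul_nonneg (Real.exp_pos _).le hg0)]
      calc Real.exp (Real.sqrt (2*α) * (1/(n+1))) * g0 α x (1/(n+1))
          ≤ Real.exp (Real.sqrt (2*α)) * ((2 / Real.sqrt (2*α)) * max (Real.sqrt (2*α)) 1 * min 1 x) :=
            mul_le_mul (hexp_le n) (g0_le_bound hα hx.le (hy_pos n).le) hg0 (Real.exp_pos _).le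
        _ = _ := by ring
    · filter_upwards [ae_restrict_mem measurableSet_Ioi] with x hx
      have hb : Filter.Tendsto (fun n : ℕ => Real.exp (Real.sqrt (2*α)) *
          ((2 / Real.sqrt (2*α)) * Real.sinh (Real.sqrt (2*α) * (1/(n+1))))) Filter.atTop (nhds 0) := by
        have h0 : Filter.Tendsto (fun n : ℕ => (1:ℝ)/(n+1)) Filter.atTop (nhds 0) :=
          tendsto_one_div_add_atTop_nhds_zero_nat
        have h1 : Filter.Tendsto (fun n : ℕ => Real.sqrt (2*α) * (1/(n+1))) Filter.atTop (nhds 0) := by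
          simpa using h0.const_mul (Real.sqrt (2*α))
        have h2 : Filter.Tendsto (fun n : ℕ => Real.sinh (Real.sqrt (2*α) * (1/(n+1)))) Filter.atTop (nhds 0) := by
          simpa [Function.comp_def] using (Real.continuous_sinh.tendsto 0).comp h1
        have h3 := (h2.const_mul (2 / Real.sqrt (2*α))).const_mul (Real.exp (Real.sqrt (2*α)))
        simpa using h3
      apply squeeze_zero (fun n => mul_nonneg (Real.exp_pos _).le (g0_nonneg hx.le (hy_pos n).le))
        (fun n => ?_) hb
      exact mul_le_mul (hexp_le n) (g0_le_sinh hα hx.le (hy_pos n).le)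
        (g0_nonneg hx.le (hy_pos n).le) (Real.exp_pos _).le
  have hconst : ∀ n : ℕ, (∫ x in Set.Ioi (0:ℝ),
      Real.exp (Real.sqrt (2*α) * (1/(n+1))) * g0 α x (1/(n+1)) ∂p₄) = cst := by
    intro n
    rw [integral_const_mul]
    exact hcst _ (Set.mem_Ioi.2 (hy_pos n))
  have hcst0 : cst = 0 := by
    simp only [hconst, integral_zero] at hDCT
    exact tendsto_nhds_unique tendsto_const_nhds hDCT
  have hint1 : (∫ x in Set.Ioi (0:ℝ), g0 α x 1 ∂p₄) = 0 := by
    have h := hcst 1 (Set.mem_Ioi.2 one_pos)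
    rw [hcst0] at h
    exact (mul_eq_zero.1 h).resolve_left (Real.exp_pos _).ne'
  have hae : (fun x => g0 α x 1) =ᵐ[p₄.restrict (Set.Ioi 0)] 0 := by
    refine (integral_eq_zero_iff_of_nonneg_ae ?_ (hInt 1 one_pos)).1 hint1
    filter_upwards [ae_restrict_mem measurableSet_Ioi] with x hx
    exact g0_nonneg hx.le zero_le_one
  rw [Filter.EventuallyEq, ae_iff] at hae
  refine le_antisymm ?_ zero_le
  calc p₄ (Set.Ioi 0) = p₄.restrict (Set.Ioi 0) (Set.Ioi 0) := by
        rw [Measure.restrict_apply measurableSet_Ioi]; simp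
    _ ≤ p₄.restrict (Set.Ioi 0) {x | ¬ g0 α x 1 = 0} := by
        refine measure_mono (fun x hx => ?_)
        have hpos : 0 < g0 α x 1 := by
          have hmin : 0 < min x 1 := lt_min (Set.mem_Ioi.1 hx) one_pos
          exact mul_pos (mul_pos (by positivity) (Real.sinh_pos_iff.2 (by positivity)))
            (Real.exp_pos _)
        exact hpos.ne'
    _ = 0 := hae
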